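/- Let n ∈ ℝ³ be a unit vector, x₀ ∈ ℝ³, α⁺, α⁻ > 0, and define A c = ⟨c, n⟩ n + (α⁺/α⁻)(c − ⟨c, n⟩ n). Let c ∈ ℝ, a⁺ ∈ ℝ³, set a⁻ = A a⁺, and define v^±(x) = c (x − x₀) + a^±. Then: (i) ⟨v⁺(x), n⟩ = ⟨v⁻(x), n⟩ for every x in the plane {x : ⟨x − x₀, n⟩ = 0}; (ii) α⁺ (v⁺(x₀) × n) = α⁻ (v⁻(x₀) × n), where × is the cross product on ℝ³; and (iii) both pieces have the same constant divergence: the sum of the diagonal entries of the (constant) Jacobian of v^± equals 3c for both signs. -/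

import Mathlib

open Matrix

lemma div_is_3c (c : ℝ) (x0 a x : Fin 3 → ℝ) :
    ∑ i : Fin 3, fderiv ℝ (fun y : Fin 3 → ℝ => c • (y - x0) + a) x (Pi.single i 1) i
      = 3 * c := by
  have h : HasFDerivAt (fun y : Fin 3 → ℝ => c • (y - x0) + a)
      (c • ContinuousLinearMap.id ℝ (Fin 3 → ℝ)) x := by
    simpa using (((hasFDerivAt_id (𝕜 := ℝ) x).sub_const x0).const_smul c).add_const a
  rw [h.fderiv]
  simp [Fin.sum_univ_three]


/-- The H(div) IFE functions of Table 1 satisfy the three approximate interface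
jump conditions: with `a⁻ = A a⁺` and `v^±(x) = c (x − x₀) + a^±`,
(i) normal traces of `v^±` match on the plane `⟨x − x₀, n⟩ = 0`;
(ii) `α⁺ (v⁺(x₀) × n) = α⁻ (v⁻(x₀) × n)`;
(iii) both pieces have the same constant divergence `3c` (trace of the Jacobian). -/
theorem hdiv_ife_jump_conditions
    (n : Fin 3 → ℝ) (hn : n ⬝ᵥ n = 1) (x0 : Fin 3 → ℝ)
    (αp αm : ℝ) (hαp : 0 < αp) (hαm : 0 < αm)
    (c : ℝ) (ap am : Fin 3 → ℝ)
    (ham : am = (ap ⬝ᵥ n) • n + (αp / αm) • (ap - (ap ⬝ᵥ n) • n)) :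
    (∀ x : Fin 3 → ℝ, (x - x0) ⬝ᵥ n = 0 →
        (c • (x - x0) + ap) ⬝ᵥ n = (c • (x - x0) + am) ⬝ᵥ n) ∧
    αp • ((c • (x0 - x0) + ap) ⨯₃ n) = αm • ((c • (x0 - x0) + am) ⨯₃ n) ∧
    (∀ x : Fin 3 → ℝ,
      (∑ i : Fin 3, fderiv ℝ (fun y : Fin 3 → ℝ => c • (y - x0) + ap) x (Pi.single i 1) i
        = 3 * c) ∧
      (∑ i : Fin 3, fderiv ℝ (fun y : Fin 3 → ℝ => c • (y - x0) + am) x (Pi.single i 1) i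
        = 3 * c)) := by
  have hamn : am ⬝ᵥ n = ap ⬝ᵥ n := by
    subst ham
    simp [add_dotProduct, smul_dotProduct, sub_dotProduct, hn]
  refine ⟨?_, ?_, fun x => ⟨div_is_3c c x0 ap x, div_is_3c c x0 am x⟩⟩
  · intro x hx
    simp [add_dotProduct, smul_dotProduct, hx, hamn]
  · have h0 : c • (x0 - x0) = (0 : Fin 3 → ℝ) := by simp
    rw [h0, zero_add, zero_add, ham]
    have hcross : ((ap ⬝ᵥ n) • n + (αp / αm) • (ap - (ap ⬝ᵥ n) • n)) ⨯₃ n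
        = (αp / αm) • (ap ⨯₃ n) := by
      simp [map_add, _root_.map_smul, map_sub, cross_self]
    rw [hcross, smul_smul, mul_div_cancel₀ _ (ne_of_gt hαm)]
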